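/- Let f : F₂' → ℤ be a signed-area homomorphism. Then for all a, b ∈ F₂, f([a,b]) = exp_x(a)·exp_y(b) − exp_y(a)·exp_x(b). (The signed area of a commutator [a,b] equals the determinant of the pair of exponent vectors of a and b.) -/

import Mathlib

/-- The total exponent of `x` in a word of the free group on `{x, y}`. -/
def expx (w : FreeGroup (Fin 2)) : ℤ :=
  Multiplicative.toAdd
    (FreeGroup.lift (fun i => Multiplicative.ofAdd (if i = 0 then (1 : ℤ) else 0)) w)

/-- The total exponent of `y` in a word of the free group on `{x, y}`. -/
def expy (w : FreeGroup (Fin 2)) : ℤ :=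
  Multiplicative.toAdd
    (FreeGroup.lift (fun i => Multiplicative.ofAdd (if i = 1 then (1 : ℤ) else 0)) w)

open scoped commutatorElement

namespace SignedArea

abbrev F2 := FreeGroup (Fin 2)

noncomputable abbrev γ : F2 := ⁅FreeGroup.of (0 : Fin 2), FreeGroup.of (1 : Fin 2)⁆

/-- `E w n` : `w` is a product of conjugates of `γ^{±1}` with signed count `n`. -/
inductive E : F2 → ℤ → Prop
  | one : E 1 0
  | conj (u : F2) : E (u * γ * u⁻¹) 1
  | mul {w w' : F2} {n n' : ℤ} : E w n → E w' n' → E (w * w') (n + n')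
  | inv {w : F2} {n : ℤ} : E w n → E w⁻¹ (-n)

lemma E.mem {w : F2} {n : ℤ} (h : E w n) : w ∈ commutator F2 := by
  induction h with
  | one => exact one_mem _
  | conj u =>
      have hγ : γ ∈ commutator F2 :=
        Subgroup.commutator_mem_commutator (Subgroup.mem_top _) (Subgroup.mem_top _)
      simpa [mul_assoc] using (Subgroup.Normal.conj_mem inferInstance γ hγ u)
  | mul _ _ ih ih' => exact mul_mem ih ih'
  | inv _ ih => exact inv_mem ih

lemma E.conj' {w : F2} {n : ℤ} (h : E w n) (u : F2) : E (u * w * u⁻¹) n := by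
  induction h with
  | one => simpa using E.one
  | conj v =>
      have := E.conj (u * v)
      simpa [mul_assoc] using this
  | @mul w w' n n' _ _ ih ih' =>
      have := E.mul ih ih'
      have hrw : (u * w * u⁻¹) * (u * w' * u⁻¹) = u * (w * w') * u⁻¹ := by group
      rwa [hrw] at this
  | @inv w n _ ih =>
      have := E.inv ih
      have hrw : (u * w * u⁻¹)⁻¹ = u * w⁻¹ * u⁻¹ := by group
      rwa [hrw] at this

lemma E_mul_left {a a' b : F2} {m m' : ℤ}
    (h : E ⁅a, b⁆ m) (h' : E ⁅a', b⁆ m') : E ⁅a * a', b⁆ (m + m') := by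
  have hid : ⁅a * a', b⁆ = (a * ⁅a', b⁆ * a⁻¹) * ⁅a, b⁆ := by
    simp only [commutatorElement_def]; group
  rw [hid, add_comm]
  exact E.mul (h'.conj' a) h

lemma E_inv_left {a b : F2} {m : ℤ} (h : E ⁅a, b⁆ m) : E ⁅a⁻¹, b⁆ (-m) := by
  have hid : ⁅a⁻¹, b⁆ = a⁻¹ * ⁅a, b⁆⁻¹ * a⁻¹⁻¹ := by
    simp only [commutatorElement_def]; group
  rw [hid]
  exact (E.inv h).conj' a⁻¹

lemma E_mul_right {a b b' : F2} {m m' : ℤ}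
    (h : E ⁅a, b⁆ m) (h' : E ⁅a, b'⁆ m') : E ⁅a, b * b'⁆ (m + m') := by
  have hid : ⁅a, b * b'⁆ = ⁅a, b⁆ * (b * ⁅a, b'⁆ * b⁻¹) := by
    simp only [commutatorElement_def]; group
  rw [hid]
  exact E.mul h (h'.conj' b)

lemma E_inv_right {a b : F2} {m : ℤ} (h : E ⁅a, b⁆ m) : E ⁅a, b⁻¹⁆ (-m) := by
  have hid : ⁅a, b⁻¹⁆ = b⁻¹ * ⁅a, b⁆⁻¹ * b⁻¹⁻¹ := by
    simp only [commutatorElement_def]; group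
  rw [hid]
  exact (E.inv h).conj' b⁻¹

-- exponent lemmas
lemma expx_one : expx 1 = 0 := by simp [expx]
lemma expy_one : expy 1 = 0 := by simp [expy]
lemma expx_mul (a b : F2) : expx (a * b) = expx a + expx b := by simp [expx]
lemma expy_mul (a b : F2) : expy (a * b) = expy a + expy b := by simp [expy]
lemma expx_inv (a : F2) : expx a⁻¹ = -expx a := by simp [expx]
lemma expy_inv (a : F2) : expy a⁻¹ = -expy a := by simp [expy]
lemma expx_of (i : Fin 2) : expx (FreeGroup.of i) = if i = 0 then 1 else 0 := by
  simp [expx]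
lemma expy_of (i : Fin 2) : expy (FreeGroup.of i) = if i = 1 then 1 else 0 := by
  simp [expy]

noncomputable def D (a b : F2) : ℤ := expx a * expy b - expy a * expx b

lemma pure_eq_of (i : Fin 2) : (pure i : F2) = FreeGroup.of i := rfl

lemma main (a b : F2) : E ⁅a, b⁆ (D a b) := by
  induction a using FreeGroup.induction_on with
  | C1 =>
      have : ⁅(1 : F2), b⁆ = 1 := by group
      rw [this]
      have : D 1 b = 0 := by simp [D, expx_one, expy_one]
      rw [this]; exact E.one
  | of i =>
      induction b using FreeGroup.induction_on with
      | C1 =>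
          have h1 : ⁅FreeGroup.of i, (1 : F2)⁆ = 1 := by group
          have h2 : D (FreeGroup.of i) 1 = 0 := by simp [D, expx_one, expy_one]
          rw [h1, h2]; exact E.one
      | of j =>
          fin_cases i <;> fin_cases j <;> simp only [Fin.isValue, Fin.mk_one, Fin.mk_zero, show ((⟨0, by norm_num⟩ : Fin 2)) = 0 from rfl, show ((⟨1, by norm_num⟩ : Fin 2)) = 1 from rfl]
          · have h1 : ⁅FreeGroup.of (0:Fin 2), FreeGroup.of (0:Fin 2)⁆ = 1 := by group
            have h2 : D (FreeGroup.of (0:Fin 2)) (FreeGroup.of (0:Fin 2)) = 0 := by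
              simp [D, expx_of, expy_of]
            rw [h1, h2]; exact E.one
          · have h2 : D (FreeGroup.of (0:Fin 2)) (FreeGroup.of (1:Fin 2)) = 1 := by
              simp [D, expx_of, expy_of]
            rw [h2]
            have := E.conj (1 : F2)
            simpa using this
          · have h2 : D (FreeGroup.of (1:Fin 2)) (FreeGroup.of (0:Fin 2)) = -1 := by
              simp [D, expx_of, expy_of]
            have h1 : ⁅FreeGroup.of (1:Fin 2), FreeGroup.of (0:Fin 2)⁆ = γ⁻¹ := by
              simp only [commutatorElement_def, γ]; group
            rw [h1, h2]
            have := E.inv (by simpa using E.conj (1 : F2))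
            simpa using this
          · have h1 : ⁅FreeGroup.of (1:Fin 2), FreeGroup.of (1:Fin 2)⁆ = 1 := by group
            have h2 : D (FreeGroup.of (1:Fin 2)) (FreeGroup.of (1:Fin 2)) = 0 := by
              simp [D, expx_of, expy_of]
            rw [h1, h2]; exact E.one
      | inv_of j hj =>
          have := E_inv_right hj
          have hD : D (FreeGroup.of i) (FreeGroup.of j)⁻¹ = -(D (FreeGroup.of i) (FreeGroup.of j)) := by
            simp [D, expx_inv, expy_inv]; ring
          rw [hD]; exact this
      | mul b1 b2 hb1 hb2 =>
          have := E_mul_right hb1 hb2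
          have hD : D (FreeGroup.of i) (b1 * b2)
              = D (FreeGroup.of i) b1 + D (FreeGroup.of i) b2 := by
            simp [D, expx_mul, expy_mul]; ring
          rw [hD]; exact this
  | inv_of i hi =>
      have := E_inv_left hi
      have hD : D (FreeGroup.of i)⁻¹ b = -(D (FreeGroup.of i) b) := by
        simp [D, expx_inv, expy_inv]; ring
      rw [hD]; exact this
  | mul a1 a2 ha1 ha2 =>
      have := E_mul_left ha1 ha2
      have hD : D (a1 * a2) b = D a1 b + D a2 b := by
        simp [D, expx_mul, expy_mul]; ring
      rw [hD]; exact this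

end SignedArea

theorem stmt_6
    (f : ↥(commutator (FreeGroup (Fin 2))) →* Multiplicative ℤ)
    (hf : ∀ (u : FreeGroup (Fin 2)) (w : ↥(commutator (FreeGroup (Fin 2)))),
      (w : FreeGroup (Fin 2)) =
          u * ⁅FreeGroup.of (0 : Fin 2), FreeGroup.of (1 : Fin 2)⁆ * u⁻¹ →
      f w = Multiplicative.ofAdd (1 : ℤ))
    (a b : FreeGroup (Fin 2)) (w : ↥(commutator (FreeGroup (Fin 2))))
    (hw : (w : FreeGroup (Fin 2)) = ⁅a, b⁆) :
    Multiplicative.toAdd (f w) = expx a * expy b - expy a * expx b := by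
  -- value of f on E-expressible elements
  have fval : ∀ (v : FreeGroup (Fin 2)) (n : ℤ), SignedArea.E v n →
      ∀ (h : v ∈ commutator (FreeGroup (Fin 2))), f ⟨v, h⟩ = Multiplicative.ofAdd n := by
    intro v n hE
    induction hE with
    | one =>
        intro h
        have : (⟨1, h⟩ : ↥(commutator (FreeGroup (Fin 2)))) = 1 := rfl
        rw [this, map_one]; rfl
    | conj u =>
        intro h
        exact hf u ⟨_, h⟩ rfl
    | @mul v v' n n' h1 h2 ih1 ih2 =>
        intro h
        have hv := h1.mem
        have hv' := h2.mem
        have : (⟨v * v', h⟩ : ↥(commutator (FreeGroup (Fin 2))))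
            = ⟨v, hv⟩ * ⟨v', hv'⟩ := rfl
        rw [this, map_mul, ih1 hv, ih2 hv']
        rfl
    | @inv v n h1 ih =>
        intro h
        have hv := h1.mem
        have : (⟨v⁻¹, h⟩ : ↥(commutator (FreeGroup (Fin 2)))) = (⟨v, hv⟩)⁻¹ := rfl
        rw [this, map_inv, ih hv]
        rfl
  have hE := SignedArea.main a b
  have hmem := hE.mem
  have hwval : w = ⟨⁅a, b⁆, hmem⟩ := Subtype.ext hw
  rw [hwval, fval _ _ hE hmem]
  rfl
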